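/- Let n ≥ 1, let V : (0,∞) → Matrix (Fin n) (Fin n) ℂ be locally integrable with V(x)† = V(x) for a.e. x, and fix k ∈ ℝ. Suppose f : (0,∞) → Matrix (Fin n) (Fin n) ℂ is twice continuously differentiable, satisfies -f''(x) + V(x)·f(x) = k²·f(x) for a.e. x > 0, and satisfies the Jost asymptotics e^{-ikx}f(x) → Iₙ and e^{-ikx}f'(x) → ik·Iₙ as x → ∞. Then for every x > 0 one has f(x)†·f'(x) - f'(x)†·f(x) = 2ik·Iₙ. -/

import Mathlib

open MeasureTheory Matrix Filter Topology Complex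

attribute [local instance] Matrix.linftyOpNormedAddCommGroup Matrix.linftyOpNormedSpace
  Matrix.linftyOpNormedRing Matrix.linftyOpNormedAlgebra

noncomputable def ctCLM (n : ℕ) : Matrix (Fin n) (Fin n) ℂ →L[ℝ] Matrix (Fin n) (Fin n) ℂ :=
  LinearMap.toContinuousLinearMap
    { toFun := conjTranspose
      map_add' := fun A B => conjTranspose_add A B
      map_smul' := fun r A => by simp [Matrix.conjTranspose_smul] }

/-- **Wronskian relation (10) of Proposition 2.1(c)**: for a self-adjoint locally integrable
potential `V` on `(0,∞)` and a twice continuously differentiable solution `f` of the matrix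
Schrödinger equation `-f'' + V f = k² f` with the Jost asymptotics
`e^{-ikx} f(x) → I` and `e^{-ikx} f'(x) → ik I` as `x → ∞`, one has
`f(x)† f'(x) - f'(x)† f(x) = 2ik I` for every `x > 0`. -/
theorem wronskian_relation_jost (n : ℕ) (hn : 1 ≤ n)
    (V : ℝ → Matrix (Fin n) (Fin n) ℂ)
    (hVloc : @LocallyIntegrableOn ℝ (Matrix (Fin n) (Fin n) ℂ) _ _ (_)
      SeminormedAddGroup.toContinuousENorm V (Set.Ioi 0) volume)
    (hVherm : ∀ᵐ x ∂(volume.restrict (Set.Ioi 0)), (V x)ᴴ = V x)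
    (k : ℝ) (f : ℝ → Matrix (Fin n) (Fin n) ℂ)
    (hf : ContDiffOn ℝ 2 f (Set.Ioi 0))
    (hode : ∀ᵐ x ∂(volume.restrict (Set.Ioi 0)),
      -(deriv (deriv f) x) + V x * f x = ((k : ℂ) ^ 2) • f x)
    (hasymp : Tendsto (fun x : ℝ => Complex.exp (-(Complex.I * k * x)) • f x) atTop
      (𝓝 (1 : Matrix (Fin n) (Fin n) ℂ)))
    (hasymp' : Tendsto (fun x : ℝ => Complex.exp (-(Complex.I * k * x)) • deriv f x) atTop
      (𝓝 ((Complex.I * k) • (1 : Matrix (Fin n) (Fin n) ℂ)))) :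
    ∀ x : ℝ, 0 < x →
      (f x)ᴴ * deriv f x - (deriv f x)ᴴ * f x
        = (2 * Complex.I * k) • (1 : Matrix (Fin n) (Fin n) ℂ) := by
  have hso : IsOpen (Set.Ioi (0:ℝ)) := isOpen_Ioi
  set W : ℝ → Matrix (Fin n) (Fin n) ℂ := fun y => (f y)ᴴ * deriv f y - (deriv f y)ᴴ * f y
    with hWdef
  set W' : ℝ → Matrix (Fin n) (Fin n) ℂ :=
    fun y => (f y)ᴴ * deriv (deriv f) y - (deriv (deriv f) y)ᴴ * f y with hW'def
  -- basic differentiability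
  have hfd : ∀ x ∈ Set.Ioi (0:ℝ), HasDerivAt f (deriv f x) x := by
    intro x hx
    exact ((hf.differentiableOn (by norm_num)).differentiableAt
      (hso.mem_nhds hx)).hasDerivAt
  have hf'c : ContDiffOn ℝ 1 (deriv f) (Set.Ioi 0) :=
    hf.deriv_of_isOpen hso (by norm_num)
  have hf'd : ∀ x ∈ Set.Ioi (0:ℝ), HasDerivAt (deriv f) (deriv (deriv f) x) x := by
    intro x hx
    exact ((hf'c.differentiableOn (by norm_num)).differentiableAt
      (hso.mem_nhds hx)).hasDerivAt
  have hf''c : ContinuousOn (deriv (deriv f)) (Set.Ioi 0) :=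
    hf'c.continuousOn_deriv_of_isOpen hso le_rfl
  -- derivative of the Wronskian
  have hW : ∀ x ∈ Set.Ioi (0:ℝ), HasDerivAt W (W' x) x := by
    intro x hx
    have h1 : HasDerivAt (fun y => (f y)ᴴ) ((deriv f x)ᴴ) x :=
      (ctCLM n).hasFDerivAt.comp_hasDerivAt x (hfd x hx)
    have h2 : HasDerivAt (fun y => (deriv f y)ᴴ) ((deriv (deriv f) x)ᴴ) x :=
      (ctCLM n).hasFDerivAt.comp_hasDerivAt x (hf'd x hx)
    have hA := h1.mul (hf'd x hx)
    have hB := h2.mul (hfd x hx)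
    have := hA.sub hB
    exact this.congr_deriv (by simp only [W']; abel)
  -- the derivative vanishes a.e.
  have hzero : ∀ᵐ t ∂(volume.restrict (Set.Ioi (0:ℝ))), W' t = 0 := by
    filter_upwards [hode, hVherm] with t ht hherm
    have hF2 : deriv (deriv f) t = V t * f t - ((k:ℂ)^2) • f t := by
      rw [← ht]; abel
    have hk : star (((k:ℂ))^2) = ((k:ℂ))^2 := by
      rw [star_pow, Complex.star_def, Complex.conj_ofReal]
    simp only [hW'def, hF2, conjTranspose_sub, conjTranspose_mul, conjTranspose_smul, hherm,
      hk, Matrix.mul_sub, Matrix.sub_mul, Matrix.smul_mul, Matrix.mul_smul, Matrix.mul_assoc]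
    abel
  -- W is constant on (0, ∞)
  have hconst : ∀ x ∈ Set.Ioi (0:ℝ), ∀ y ∈ Set.Ioi (0:ℝ), W x = W y := by
    intro x hx y hy
    have hsub : Set.uIcc x y ⊆ Set.Ioi (0:ℝ) := by
      intro t ht
      have := ht.1
      rcases le_total x y with h | h <;> simp [Set.uIcc_of_le, Set.uIcc_of_ge, h] at ht <;>
        [exact lt_of_lt_of_le hx ht.1; exact lt_of_lt_of_le hy ht.1]
    have hint := ContinuousOn.intervalIntegrable (μ := volume) (u := W') (a := x) (b := y) (by
      apply ContinuousOn.sub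
      · exact (((ctCLM n).continuous.comp_continuousOn
          ((hf.continuousOn).mono hsub)).mul (hf''c.mono hsub))
      · exact (((ctCLM n).continuous.comp_continuousOn
          (hf''c.mono hsub)).mul ((hf.continuousOn).mono hsub)))
    have hftc : ∫ t in x..y, W' t = W y - W x :=
      intervalIntegral.integral_eq_sub_of_hasDerivAt (fun t ht => hW t (hsub ht)) hint
    have hz2 : ∀ᵐ t ∂volume, t ∈ Set.uIoc x y → W' t = 0 := by
      have := (ae_restrict_iff' measurableSet_Ioi).mp hzero
      filter_upwards [this] with t ht h2
      exact ht (Set.uIoc_subset_uIcc.trans hsub h2)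
    have : ∫ t in x..y, W' t = ∫ t in x..y, (0 : Matrix (Fin n) (Fin n) ℂ) :=
      intervalIntegral.integral_congr_ae hz2
    rw [this, intervalIntegral.integral_zero] at hftc
    exact (sub_eq_zero.mp hftc.symm).symm
  -- rewrite W in terms of the scaled functions
  have hWg : ∀ x : ℝ, W x =
      (Complex.exp (-(Complex.I * k * x)) • f x)ᴴ *
        (Complex.exp (-(Complex.I * k * x)) • deriv f x) -
      (Complex.exp (-(Complex.I * k * x)) • deriv f x)ᴴ *
        (Complex.exp (-(Complex.I * k * x)) • f x) := by
    intro x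
    have hstar : star (Complex.exp (-(Complex.I * k * x))) = Complex.exp (Complex.I * k * x) := by
      rw [Complex.star_def, ← Complex.exp_conj]
      congr 1
      simp [Complex.conj_ofReal]
    have hmul : Complex.exp (-(Complex.I * k * x)) * Complex.exp (Complex.I * k * x) = 1 := by
      rw [← Complex.exp_add]; simp
    simp only [conjTranspose_smul, hstar, Matrix.smul_mul, Matrix.mul_smul, smul_smul, hmul,
      one_smul, hWdef]
  -- compute the limit of W at infinity
  have hlim : Tendsto W atTop (𝓝 ((2 * Complex.I * k) • (1 : Matrix (Fin n) (Fin n) ℂ))) := by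
    have h1 : Tendsto (fun x : ℝ => (Complex.exp (-(Complex.I * k * x)) • f x)ᴴ) atTop
        (𝓝 ((1 : Matrix (Fin n) (Fin n) ℂ)ᴴ)) :=
      ((ctCLM n).continuous.tendsto _).comp hasymp
    have h2 : Tendsto (fun x : ℝ => (Complex.exp (-(Complex.I * k * x)) • deriv f x)ᴴ) atTop
        (𝓝 (((Complex.I * k) • (1 : Matrix (Fin n) (Fin n) ℂ))ᴴ)) :=
      ((ctCLM n).continuous.tendsto _).comp hasymp'
    have hval : ((1 : Matrix (Fin n) (Fin n) ℂ)ᴴ * ((Complex.I * k) • 1) -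
        ((Complex.I * k) • (1 : Matrix (Fin n) (Fin n) ℂ))ᴴ * 1)
        = (2 * Complex.I * k) • (1 : Matrix (Fin n) (Fin n) ℂ) := by
      simp only [conjTranspose_one, conjTranspose_smul, Complex.star_def,
        Complex.conj_I, Complex.conj_ofReal, Matrix.smul_mul, Matrix.mul_smul,
        Matrix.one_mul, Matrix.mul_one]
      match_scalars
      rw [_root_.map_mul, Complex.conj_I, Complex.conj_ofReal]
      ring
    have h3 := (h1.mul hasymp').sub (h2.mul hasymp)
    rw [hval] at h3
    exact Tendsto.congr (fun x => (hWg x).symm) h3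
  -- conclude
  have hWc : Tendsto W atTop (𝓝 (W 1)) := by
    refine tendsto_const_nhds.congr' ?_
    filter_upwards [eventually_gt_atTop (0:ℝ)] with x hx
    exact hconst 1 (by norm_num) x hx
  have hW1 : W 1 = (2 * Complex.I * k) • (1 : Matrix (Fin n) (Fin n) ℂ) :=
    tendsto_nhds_unique hWc hlim
  intro x hx
  calc W x = W 1 := hconst x hx 1 (by norm_num)
    _ = _ := hW1
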